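/- For the bivariate normal with zero means, unit variances, and correlation ρ ∈ (−1,1): the Fisher information is I(ρ) = (1+ρ²)/(1−ρ²)², the third log-likelihood derivative expectation satisfies E[(∂³ log f/∂ρ³)-related quantity] L_{1,1,1} = −2ρ(3+ρ²)/(1−ρ²)³, and the ratio L_{1,1,1}/I^{3/2}(ρ) = −2ρ(3+ρ²)/(1+ρ²)^{3/2} is not constant in ρ; hence Jeffreys' prior fails the second-order probability matching condition in this model. -/

import Mathlib

open Real MeasureTheory

set_option maxRecDepth 8000
set_option maxHeartbeats 1000000

/- ### 1D Gaussian moment lemmas -/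

lemma neg_one_lt_natCast (n : ℕ) : (-1 : ℝ) < n :=
  lt_of_lt_of_le (by norm_num) (Nat.cast_nonneg n)

lemma integrable_pow_gauss {c : ℝ} (hc : 0 < c) (n : ℕ) :
    Integrable (fun t : ℝ => t ^ n * Real.exp (-c * t ^ 2)) := by
  simpa [Real.rpow_natCast] using
    integrable_rpow_mul_exp_neg_mul_sq hc (s := (n : ℝ)) (neg_one_lt_natCast n)

lemma gauss_odd {c : ℝ} (m : ℕ) :
    ∫ t : ℝ, t ^ (2 * m + 1) * Real.exp (-c * t ^ 2) = 0 := by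
  have h : ∫ t : ℝ, t ^ (2 * m + 1) * Real.exp (-c * t ^ 2)
      = ∫ t : ℝ, (-t) ^ (2 * m + 1) * Real.exp (-c * (-t) ^ 2) := by
    conv_lhs => rw [← Measure.map_neg_eq_self (volume : Measure ℝ)]
    exact (Homeomorph.neg ℝ).measurableEmbedding.integral_map
      (fun t => t ^ (2 * m + 1) * Real.exp (-c * t ^ 2))
  have h2 : ∀ t : ℝ, (-t) ^ (2 * m + 1) * Real.exp (-c * (-t) ^ 2)
      = -(t ^ (2 * m + 1) * Real.exp (-c * t ^ 2)) := by
    intro t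
    rw [Odd.neg_pow ⟨m, by ring⟩, neg_sq]
    ring
  simp only [h2, integral_neg] at h
  linarith

lemma gauss_even {c : ℝ} (hc : 0 < c) (m : ℕ) :
    ∫ t : ℝ, t ^ (2 * m) * Real.exp (-c * t ^ 2) =
      c ^ (-(2 * (m : ℝ) + 1) / 2) * Real.Gamma ((2 * (m : ℝ) + 1) / 2) := by
  have habs : ∀ t : ℝ, t ^ (2 * m) * Real.exp (-c * t ^ 2)
      = |t| ^ (2 * m) * Real.exp (-c * |t| ^ 2) := by
    intro t; rw [pow_mul, pow_mul, sq_abs]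
  have hset : ∀ t ∈ Set.Ioi (0:ℝ), t ^ (2 * m) * Real.exp (-c * t ^ 2)
      = t ^ ((2 * m : ℕ) : ℝ) * Real.exp (-c * t ^ (2:ℝ)) := by
    intro t _
    rw [Real.rpow_natCast, Real.rpow_two]
  calc ∫ t : ℝ, t ^ (2 * m) * Real.exp (-c * t ^ 2)
      = ∫ t : ℝ, |t| ^ (2 * m) * Real.exp (-c * |t| ^ 2) := by
        rw [show (fun t : ℝ => t ^ (2 * m) * Real.exp (-c * t ^ 2))
          = fun t : ℝ => |t| ^ (2 * m) * Real.exp (-c * |t| ^ 2) from funext habs]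
    _ = 2 * ∫ t in Set.Ioi (0:ℝ), t ^ (2 * m) * Real.exp (-c * t ^ 2) :=
        integral_comp_abs (f := fun t => t ^ (2 * m) * Real.exp (-c * t ^ 2))
    _ = 2 * ∫ t in Set.Ioi (0:ℝ), t ^ ((2 * m : ℕ) : ℝ) * Real.exp (-c * t ^ (2:ℝ)) := by
        rw [setIntegral_congr_fun measurableSet_Ioi hset]
    _ = c ^ (-(2 * (m : ℝ) + 1) / 2) * Real.Gamma ((2 * (m : ℝ) + 1) / 2) := by
        rw [integral_rpow_mul_exp_neg_mul_rpow (by norm_num) (neg_one_lt_natCast _) hc]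
        push_cast
        ring

lemma rpow_half_aux {c : ℝ} (hc : 0 < c) (k : ℕ) :
    c ^ (-(2 * (k:ℝ) + 1) / 2) = (c ^ k * Real.sqrt c)⁻¹ := by
  rw [show (-(2 * (k:ℝ) + 1) / 2) = -((k:ℝ) + 1/2) by ring, Real.rpow_neg hc.le,
    Real.rpow_add hc, Real.rpow_natCast, Real.sqrt_eq_rpow]

lemma gauss0 {c : ℝ} (hc : 0 < c) :
    ∫ t : ℝ, t ^ 0 * Real.exp (-c * t ^ 2) = Real.sqrt π / Real.sqrt c := by
  simp only [pow_zero, one_mul]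
  rw [integral_gaussian, Real.sqrt_div pi_pos.le c]

lemma gauss2 {c : ℝ} (hc : 0 < c) :
    ∫ t : ℝ, t ^ 2 * Real.exp (-c * t ^ 2) = Real.sqrt π / Real.sqrt c / (2 * c) := by
  have hs : Real.sqrt c ≠ 0 := by positivity
  have h := gauss_even hc 1
  rw [rpow_half_aux hc 1, show (2*((1:ℕ):ℝ)+1)/2 = 1/2+1 by norm_num,
    Real.Gamma_add_one (by norm_num), Real.Gamma_one_half_eq] at h
  norm_num at h
  simp only [neg_mul]
  rw [h]
  ring

lemma gauss4 {c : ℝ} (hc : 0 < c) :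
    ∫ t : ℝ, t ^ 4 * Real.exp (-c * t ^ 2) =
      3 * (Real.sqrt π / Real.sqrt c) / (4 * c ^ 2) := by
  have hs : Real.sqrt c ≠ 0 := by positivity
  have h := gauss_even hc 2
  rw [rpow_half_aux hc 2, show (2*((2:ℕ):ℝ)+1)/2 = (1/2+1)+1 by norm_num,
    Real.Gamma_add_one (by norm_num), Real.Gamma_add_one (by norm_num),
    Real.Gamma_one_half_eq] at h
  norm_num at h
  simp only [neg_mul]
  rw [h]
  ring

lemma gauss6 {c : ℝ} (hc : 0 < c) :
    ∫ t : ℝ, t ^ 6 * Real.exp (-c * t ^ 2) =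
      15 * (Real.sqrt π / Real.sqrt c) / (8 * c ^ 3) := by
  have hs : Real.sqrt c ≠ 0 := by positivity
  have h := gauss_even hc 3
  rw [rpow_half_aux hc 3, show (2*((3:ℕ):ℝ)+1)/2 = ((1/2+1)+1)+1 by norm_num,
    Real.Gamma_add_one (by norm_num), Real.Gamma_add_one (by norm_num),
    Real.Gamma_add_one (by norm_num), Real.Gamma_one_half_eq] at h
  norm_num at h
  simp only [neg_mul]
  rw [h]
  ring

/- ### specialized values -/

lemma hQW {v : ℝ} (hv : 0 < v) :
    Real.sqrt π / Real.sqrt ((2 * v)⁻¹) = Real.sqrt (2 * π) * Real.sqrt v := by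
  rw [Real.sqrt_inv, div_inv_eq_mul, ← Real.sqrt_mul pi_pos.le,
    ← Real.sqrt_mul (by positivity : (0:ℝ) ≤ 2 * π)]
  congr 1
  ring

lemma hPW : Real.sqrt π / Real.sqrt ((2:ℝ)⁻¹) = Real.sqrt (2 * π) := by
  rw [Real.sqrt_inv, div_inv_eq_mul, ← Real.sqrt_mul pi_pos.le]
  congr 1
  ring

lemma A0val : ∫ t : ℝ, t ^ 0 * Real.exp (-(2:ℝ)⁻¹ * t ^ 2) = Real.sqrt (2 * π) := by
  rw [gauss0 (by norm_num), hPW]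

lemma A2val : ∫ t : ℝ, t ^ 2 * Real.exp (-(2:ℝ)⁻¹ * t ^ 2) = Real.sqrt (2 * π) := by
  rw [gauss2 (by norm_num), hPW]
  norm_num

lemma A1val : ∫ t : ℝ, t ^ 1 * Real.exp (-(2:ℝ)⁻¹ * t ^ 2) = 0 := by
  simpa using gauss_odd (c := (2:ℝ)⁻¹) 0

lemma A3val : ∫ t : ℝ, t ^ 3 * Real.exp (-(2:ℝ)⁻¹ * t ^ 2) = 0 := by
  simpa using gauss_odd (c := (2:ℝ)⁻¹) 1

lemma B0val {v : ℝ} (hv : 0 < v) :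
    ∫ t : ℝ, t ^ 0 * Real.exp (-(2 * v)⁻¹ * t ^ 2) = Real.sqrt (2 * π) * Real.sqrt v := by
  rw [gauss0 (by positivity), hQW hv]

lemma B2val {v : ℝ} (hv : 0 < v) :
    ∫ t : ℝ, t ^ 2 * Real.exp (-(2 * v)⁻¹ * t ^ 2) = Real.sqrt (2 * π) * Real.sqrt v * v := by
  rw [gauss2 (by positivity), hQW hv]
  field_simp

lemma B4val {v : ℝ} (hv : 0 < v) :
    ∫ t : ℝ, t ^ 4 * Real.exp (-(2 * v)⁻¹ * t ^ 2)
      = 3 * (Real.sqrt (2 * π) * Real.sqrt v) * v ^ 2 := by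
  rw [gauss4 (by positivity), hQW hv]
  field_simp
  ring

lemma B6val {v : ℝ} (hv : 0 < v) :
    ∫ t : ℝ, t ^ 6 * Real.exp (-(2 * v)⁻¹ * t ^ 2)
      = 15 * (Real.sqrt (2 * π) * Real.sqrt v) * v ^ 3 := by
  rw [gauss6 (by positivity), hQW hv]
  field_simp
  ring

lemma B1val {v : ℝ} : ∫ t : ℝ, t ^ 1 * Real.exp (-(2 * v)⁻¹ * t ^ 2) = 0 := by
  simpa using gauss_odd (c := (2 * v)⁻¹) 0

lemma B3val {v : ℝ} : ∫ t : ℝ, t ^ 3 * Real.exp (-(2 * v)⁻¹ * t ^ 2) = 0 := by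
  simpa using gauss_odd (c := (2 * v)⁻¹) 1

lemma B5val {v : ℝ} : ∫ t : ℝ, t ^ 5 * Real.exp (-(2 * v)⁻¹ * t ^ 2) = 0 := by
  simpa using gauss_odd (c := (2 * v)⁻¹) 2

lemma key0 {v : ℝ} (hv : 0 < v) :
    (2 * π * Real.sqrt v)⁻¹ * (Real.sqrt (2 * π) * (Real.sqrt (2 * π) * Real.sqrt v)) = 1 := by
  rw [show Real.sqrt (2*π) * (Real.sqrt (2*π) * Real.sqrt v)
      = (Real.sqrt (2*π) * Real.sqrt (2*π)) * Real.sqrt v by ring,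
    Real.mul_self_sqrt (by positivity : (0:ℝ) ≤ 2*π)]
  have h : Real.sqrt v ≠ 0 := by positivity
  field_simp


lemma Mgen {v r : ℝ} (hv : 0 < v) :
    (2 * π * Real.sqrt v)⁻¹ * (Real.sqrt (2 * π) * Real.sqrt (2 * π) * (Real.sqrt v * r))
      = r := by
  rw [Real.mul_self_sqrt (by positivity : (0:ℝ) ≤ 2 * π)]
  have h : Real.sqrt v ≠ 0 := by positivity
  have hπ : π ≠ 0 := Real.pi_ne_zero
  field_simp

lemma M0 {v : ℝ} (hv : 0 < v) :
    (2 * π * Real.sqrt v)⁻¹ * (Real.sqrt (2 * π) * (Real.sqrt (2 * π) * Real.sqrt v)) = 1 := by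
  rw [show Real.sqrt (2*π) * (Real.sqrt (2*π) * Real.sqrt v)
    = Real.sqrt (2*π) * Real.sqrt (2*π) * (Real.sqrt v * 1) by ring]
  exact Mgen hv

lemma M2 {v : ℝ} (hv : 0 < v) :
    (2 * π * Real.sqrt v)⁻¹ *
      (Real.sqrt (2 * π) * (Real.sqrt (2 * π) * Real.sqrt v * v)) = v := by
  rw [show Real.sqrt (2*π) * (Real.sqrt (2*π) * Real.sqrt v * v)
    = Real.sqrt (2*π) * Real.sqrt (2*π) * (Real.sqrt v * v) by ring]
  exact Mgen hv

lemma M4 {v : ℝ} (hv : 0 < v) :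
    (2 * π * Real.sqrt v)⁻¹ *
      (Real.sqrt (2 * π) * (3 * (Real.sqrt (2 * π) * Real.sqrt v) * v ^ 2)) = 3 * v ^ 2 := by
  rw [show Real.sqrt (2*π) * (3 * (Real.sqrt (2*π) * Real.sqrt v) * v ^ 2)
    = Real.sqrt (2*π) * Real.sqrt (2*π) * (Real.sqrt v * (3 * v ^ 2)) by ring]
  exact Mgen hv

lemma M6 {v : ℝ} (hv : 0 < v) :
    (2 * π * Real.sqrt v)⁻¹ *
      (Real.sqrt (2 * π) * (15 * (Real.sqrt (2 * π) * Real.sqrt v) * v ^ 3)) = 15 * v ^ 3 := by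
  rw [show Real.sqrt (2*π) * (15 * (Real.sqrt (2*π) * Real.sqrt v) * v ^ 3)
    = Real.sqrt (2*π) * Real.sqrt (2*π) * (Real.sqrt v * (15 * v ^ 3)) by ring]
  exact Mgen hv

/- ### 2D shear product lemmas -/

lemma shear_integrable {ρ : ℝ} {g h : ℝ → ℝ} (hgc : Continuous g) (hhc : Continuous h)
    (hg : Integrable g) (hh : Integrable h) :
    Integrable (fun x : ℝ × ℝ => g x.1 * h (x.2 - ρ * x.1)) := by
  have hmeas : AEStronglyMeasurable (fun x : ℝ × ℝ => g x.1 * h (x.2 - ρ * x.1))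
      ((volume : Measure ℝ).prod (volume : Measure ℝ)) :=
    ((hgc.comp continuous_fst).mul
      (hhc.comp (continuous_snd.sub (continuous_const.mul continuous_fst)))).aestronglyMeasurable
  rw [show (volume : Measure (ℝ × ℝ)) = (volume : Measure ℝ).prod volume from rfl] at *
  rw [integrable_prod_iff hmeas]
  constructor
  · refine Filter.Eventually.of_forall fun x => ?_
    exact ((hh.comp_sub_right (ρ * x)).const_mul (g x))
  · have : (fun x : ℝ => ∫ y : ℝ, ‖g x * h (y - ρ * x)‖) =
        fun x : ℝ => ‖g x‖ * ∫ t : ℝ, ‖h t‖ := by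
      funext x
      simp_rw [norm_mul]
      rw [MeasureTheory.integral_const_mul ‖g x‖ (fun y => ‖h (y - ρ * x)‖),
        integral_sub_right_eq_self (fun t => ‖h t‖) (ρ * x)]
    rw [this]
    exact hg.norm.mul_const _

lemma shear_integral {ρ : ℝ} {g h : ℝ → ℝ} (hgc : Continuous g) (hhc : Continuous h)
    (hg : Integrable g) (hh : Integrable h) :
    ∫ x : ℝ × ℝ, g x.1 * h (x.2 - ρ * x.1) = (∫ t, g t) * (∫ t, h t) := by
  have hint := shear_integrable (ρ := ρ) hgc hhc hg hh
  rw [show (volume : Measure (ℝ × ℝ)) = (volume : Measure ℝ).prod volume from rfl] at *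
  rw [integral_prod _ hint]
  have : (fun x : ℝ => ∫ y : ℝ, g x * h (y - ρ * x)) = fun x : ℝ => g x * ∫ t : ℝ, h t := by
    funext x
    rw [MeasureTheory.integral_const_mul, integral_sub_right_eq_self (fun t => h t) (ρ * x)]
  rw [this, integral_mul_const]

/- ### the score formula -/

lemma score_formula {f : ℝ × ℝ → ℝ → ℝ}
    (hf : ∀ x ρ, f x ρ = (2 * π * Real.sqrt (1 - ρ ^ 2))⁻¹ *
      Real.exp (-(x.1 ^ 2 - 2 * ρ * x.1 * x.2 + x.2 ^ 2) / (2 * (1 - ρ ^ 2))))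
    (x : ℝ × ℝ) {ρ : ℝ} (hρ1 : -1 < ρ) (hρ2 : ρ < 1) :
    deriv (fun r => Real.log (f x r)) ρ =
      (x.1 * (x.2 - ρ * x.1) * (1 - ρ ^ 2) - ρ * (x.2 - ρ * x.1) ^ 2 + ρ * (1 - ρ ^ 2))
        / (1 - ρ ^ 2) ^ 2 := by
  have hv : (0:ℝ) < 1 - ρ ^ 2 := by nlinarith
  set G : ℝ → ℝ := fun r => -(Real.log (2 * π) + Real.log (1 - r ^ 2) / 2) -
      (x.1 ^ 2 - 2 * r * x.1 * x.2 + x.2 ^ 2) / (2 * (1 - r ^ 2)) with hG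
  have hlog : ∀ r ∈ Set.Ioo (-1 : ℝ) 1, Real.log (f x r) = G r := by
    intro r hr
    have hvr : (0:ℝ) < 1 - r ^ 2 := by nlinarith [hr.1, hr.2]
    have hsq : (0:ℝ) < Real.sqrt (1 - r ^ 2) := Real.sqrt_pos.mpr hvr
    rw [hf, Real.log_mul (by positivity) (Real.exp_ne_zero _), Real.log_exp, Real.log_inv,
      Real.log_mul (by positivity) hsq.ne', Real.log_sqrt hvr.le, hG]
    ring
  have heq : (fun r => Real.log (f x r)) =ᶠ[nhds ρ] G :=
    Filter.eventually_of_mem (Ioo_mem_nhds hρ1 hρ2) hlog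
  rw [heq.deriv_eq]
  have h1 : HasDerivAt (fun r : ℝ => 1 - r ^ 2) (-(2 * ρ)) ρ := by
    simpa using (hasDerivAt_pow 2 ρ).const_sub 1
  have h2 : HasDerivAt (fun r : ℝ => Real.log (1 - r ^ 2)) (-(2 * ρ) / (1 - ρ ^ 2)) ρ :=
    h1.log hv.ne'
  have h3 : HasDerivAt (fun r : ℝ => x.1 ^ 2 - 2 * r * x.1 * x.2 + x.2 ^ 2)
      (-(2 * x.1 * x.2)) ρ := by
    have hfun : (fun r : ℝ => x.1 ^ 2 - 2 * r * x.1 * x.2 + x.2 ^ 2)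
        = fun r : ℝ => x.1 ^ 2 - (2 * x.1 * x.2) * r + x.2 ^ 2 := by funext r; ring
    rw [hfun]
    simpa using (((hasDerivAt_id ρ).const_mul (2 * x.1 * x.2)).const_sub (x.1 ^ 2)).add_const
      (x.2 ^ 2)
  have h4 : HasDerivAt (fun r : ℝ => 2 * (1 - r ^ 2)) (2 * -(2 * ρ)) ρ := h1.const_mul 2
  have h5 := h3.div h4 (by positivity)
  have hGd : HasDerivAt G
      (-(0 + (-(2 * ρ) / (1 - ρ ^ 2)) / 2) -
        ((-(2 * x.1 * x.2)) * (2 * (1 - ρ ^ 2)) -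
          (x.1 ^ 2 - 2 * ρ * x.1 * x.2 + x.2 ^ 2) * (2 * -(2 * ρ))) / (2 * (1 - ρ ^ 2)) ^ 2) ρ := by
    exact (((hasDerivAt_const ρ (Real.log (2 * π))).add (h2.div_const 2)).neg).sub h5
  rw [hGd.deriv]
  field_simp
  ring

/-- **Failure of second-order matching for the bivariate normal correlation.**
For `(X₁,X₂) ~ N₂(0, [[1,ρ],[ρ,1]])`, `ρ ∈ (-1,1)`, with density `f(x|ρ)` and
score `s(x,ρ) = ∂ log f/∂ρ`: the Fisher information `I(ρ) = E[s²]` equals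
`(1+ρ²)/(1-ρ²)²`, the third moment `L₁,₁,₁(ρ) = E[s³]` equals
`-2ρ(3+ρ²)/(1-ρ²)³`, the ratio `L₁,₁,₁/I^{3/2} = -2ρ(3+ρ²)/(1+ρ²)^{3/2}` is not
constant in `ρ`; hence Jeffreys' prior fails the second-order probability
matching condition. -/
theorem bivariate_normal_no_second_order_matching
    (f : ℝ × ℝ → ℝ → ℝ)
    (hf : ∀ x ρ, f x ρ = (2 * π * Real.sqrt (1 - ρ ^ 2))⁻¹ *
      Real.exp (-(x.1 ^ 2 - 2 * ρ * x.1 * x.2 + x.2 ^ 2) / (2 * (1 - ρ ^ 2))))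
    (s : ℝ × ℝ → ℝ → ℝ) (hs : ∀ x ρ, s x ρ = deriv (fun r => Real.log (f x r)) ρ)
    (I L : ℝ → ℝ)
    (hI : ∀ ρ, I ρ = ∫ x : ℝ × ℝ, (s x ρ) ^ 2 * f x ρ)
    (hL : ∀ ρ, L ρ = ∫ x : ℝ × ℝ, (s x ρ) ^ 3 * f x ρ) :
    (∀ ρ : ℝ, -1 < ρ → ρ < 1 → I ρ = (1 + ρ ^ 2) / (1 - ρ ^ 2) ^ 2) ∧
    (∀ ρ : ℝ, -1 < ρ → ρ < 1 → L ρ = -2 * ρ * (3 + ρ ^ 2) / (1 - ρ ^ 2) ^ 3) ∧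
    (∀ ρ : ℝ, -1 < ρ → ρ < 1 →
      L ρ / (I ρ) ^ ((3 : ℝ) / 2) = -2 * ρ * (3 + ρ ^ 2) / (1 + ρ ^ 2) ^ ((3 : ℝ) / 2)) ∧
    ¬ (∃ c : ℝ, ∀ ρ : ℝ, -1 < ρ → ρ < 1 → L ρ / (I ρ) ^ ((3 : ℝ) / 2) = c) := by
  have hIval : ∀ ρ : ℝ, -1 < ρ → ρ < 1 → I ρ = (1 + ρ ^ 2) / (1 - ρ ^ 2) ^ 2 := by
    intro ρ h1 h2
    have hv : (0:ℝ) < 1 - ρ ^ 2 := by nlinarith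
    have hne : (1 - ρ ^ 2) ≠ 0 := ne_of_gt hv
    have hsval : ∀ x : ℝ × ℝ, s x ρ =
        (x.1 * (x.2 - ρ * x.1) * (1 - ρ ^ 2) - ρ * (x.2 - ρ * x.1) ^ 2 + ρ * (1 - ρ ^ 2))
          / (1 - ρ ^ 2) ^ 2 := fun x => (hs x ρ).trans (score_formula hf x h1 h2)
    have hfsplit : ∀ x : ℝ × ℝ, f x ρ = (2 * π * Real.sqrt (1 - ρ ^ 2))⁻¹ *
        (Real.exp (-(2:ℝ)⁻¹ * x.1 ^ 2) *
          Real.exp (-(2 * (1 - ρ ^ 2))⁻¹ * (x.2 - ρ * x.1) ^ 2)) := by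
      intro x
      rw [hf, ← Real.exp_add]
      congr 1
      field_simp
      ring
    have hcont : ∀ (c : ℝ) (a : ℕ), Continuous fun t : ℝ => t ^ a * Real.exp (-c * t ^ 2) := by
      intro c a
      fun_prop
    have hint : ∀ a b : ℕ, Integrable (fun x : ℝ × ℝ =>
        x.1 ^ a * Real.exp (-(2:ℝ)⁻¹ * x.1 ^ 2) *
          ((x.2 - ρ * x.1) ^ b * Real.exp (-(2 * (1 - ρ ^ 2))⁻¹ * (x.2 - ρ * x.1) ^ 2))) :=
      fun a b => shear_integrable (hcont _ a) (hcont _ b)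
        (integrable_pow_gauss (by norm_num) a)
        (integrable_pow_gauss (inv_pos.mpr (by linarith)) b)
    have hT : ∀ a b : ℕ, (∫ x : ℝ × ℝ,
        x.1 ^ a * Real.exp (-(2:ℝ)⁻¹ * x.1 ^ 2) *
          ((x.2 - ρ * x.1) ^ b * Real.exp (-(2 * (1 - ρ ^ 2))⁻¹ * (x.2 - ρ * x.1) ^ 2))) =
        (∫ t : ℝ, t ^ a * Real.exp (-(2:ℝ)⁻¹ * t ^ 2)) *
          ∫ t : ℝ, t ^ b * Real.exp (-(2 * (1 - ρ ^ 2))⁻¹ * t ^ 2) :=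
      fun a b => shear_integral (hcont _ a) (hcont _ b)
        (integrable_pow_gauss (by norm_num) a)
        (integrable_pow_gauss (inv_pos.mpr (by linarith)) b)
    have hEq : (fun x : ℝ × ℝ => s x ρ ^ 2 * f x ρ) =
        (fun x : ℝ × ℝ => ((1-ρ^2)^2/(1-ρ^2)^4) * ((2 * π * Real.sqrt (1 - ρ ^ 2))⁻¹ * (x.1 ^ 2 * Real.exp (-(2:ℝ)⁻¹ * x.1 ^ 2) * ((x.2 - ρ * x.1) ^ 2 * Real.exp (-(2 * (1 - ρ ^ 2))⁻¹ * (x.2 - ρ * x.1) ^ 2)))))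
        + (fun x : ℝ × ℝ => (ρ^2/(1-ρ^2)^4) * ((2 * π * Real.sqrt (1 - ρ ^ 2))⁻¹ * (x.1 ^ 0 * Real.exp (-(2:ℝ)⁻¹ * x.1 ^ 2) * ((x.2 - ρ * x.1) ^ 4 * Real.exp (-(2 * (1 - ρ ^ 2))⁻¹ * (x.2 - ρ * x.1) ^ 2)))))
        + (fun x : ℝ × ℝ => (ρ^2*(1-ρ^2)^2/(1-ρ^2)^4) * ((2 * π * Real.sqrt (1 - ρ ^ 2))⁻¹ * (x.1 ^ 0 * Real.exp (-(2:ℝ)⁻¹ * x.1 ^ 2) * ((x.2 - ρ * x.1) ^ 0 * Real.exp (-(2 * (1 - ρ ^ 2))⁻¹ * (x.2 - ρ * x.1) ^ 2)))))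
        + (fun x : ℝ × ℝ => (-2*ρ*(1-ρ^2)/(1-ρ^2)^4) * ((2 * π * Real.sqrt (1 - ρ ^ 2))⁻¹ * (x.1 ^ 1 * Real.exp (-(2:ℝ)⁻¹ * x.1 ^ 2) * ((x.2 - ρ * x.1) ^ 3 * Real.exp (-(2 * (1 - ρ ^ 2))⁻¹ * (x.2 - ρ * x.1) ^ 2)))))
        + (fun x : ℝ × ℝ => (2*ρ*(1-ρ^2)^2/(1-ρ^2)^4) * ((2 * π * Real.sqrt (1 - ρ ^ 2))⁻¹ * (x.1 ^ 1 * Real.exp (-(2:ℝ)⁻¹ * x.1 ^ 2) * ((x.2 - ρ * x.1) ^ 1 * Real.exp (-(2 * (1 - ρ ^ 2))⁻¹ * (x.2 - ρ * x.1) ^ 2)))))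
        + (fun x : ℝ × ℝ => (-2*ρ^2*(1-ρ^2)/(1-ρ^2)^4) * ((2 * π * Real.sqrt (1 - ρ ^ 2))⁻¹ * (x.1 ^ 0 * Real.exp (-(2:ℝ)⁻¹ * x.1 ^ 2) * ((x.2 - ρ * x.1) ^ 2 * Real.exp (-(2 * (1 - ρ ^ 2))⁻¹ * (x.2 - ρ * x.1) ^ 2))))) := by
      funext x
      simp only [Pi.add_apply]
      rw [hsval x, hfsplit x]
      field_simp
      ring
    have i0 := ((hint 2 2).const_mul ((2 * π * Real.sqrt (1 - ρ ^ 2))⁻¹)).const_mul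
      (((1-ρ^2)^2/(1-ρ^2)^4) : ℝ)
    have i1 := ((hint 0 4).const_mul ((2 * π * Real.sqrt (1 - ρ ^ 2))⁻¹)).const_mul
      ((ρ^2/(1-ρ^2)^4) : ℝ)
    have i2 := ((hint 0 0).const_mul ((2 * π * Real.sqrt (1 - ρ ^ 2))⁻¹)).const_mul
      ((ρ^2*(1-ρ^2)^2/(1-ρ^2)^4) : ℝ)
    have i3 := ((hint 1 3).const_mul ((2 * π * Real.sqrt (1 - ρ ^ 2))⁻¹)).const_mul
      ((-2*ρ*(1-ρ^2)/(1-ρ^2)^4) : ℝ)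
    have i4 := ((hint 1 1).const_mul ((2 * π * Real.sqrt (1 - ρ ^ 2))⁻¹)).const_mul
      ((2*ρ*(1-ρ^2)^2/(1-ρ^2)^4) : ℝ)
    have i5 := ((hint 0 2).const_mul ((2 * π * Real.sqrt (1 - ρ ^ 2))⁻¹)).const_mul
      ((-2*ρ^2*(1-ρ^2)/(1-ρ^2)^4) : ℝ)
    rw [hI ρ, hEq]
    rw [MeasureTheory.integral_add' ((((i0.add i1).add i2).add i3).add i4) i5]
    rw [MeasureTheory.integral_add' (((i0.add i1).add i2).add i3) i4]
    rw [MeasureTheory.integral_add' ((i0.add i1).add i2) i3]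
    rw [MeasureTheory.integral_add' (i0.add i1) i2]
    rw [MeasureTheory.integral_add' i0 i1]
    simp only [MeasureTheory.integral_const_mul]
    rw [hT 2 2, hT 0 4, hT 0 0, hT 1 3, hT 1 1, hT 0 2]
    rw [A0val, A1val, A2val, B0val hv, B1val, B2val hv, B3val, B4val hv]
    rw [M0 hv, M2 hv, M4 hv]
    field_simp
    ring
  have hLval : ∀ ρ : ℝ, -1 < ρ → ρ < 1 → L ρ = -2 * ρ * (3 + ρ ^ 2) / (1 - ρ ^ 2) ^ 3 := by
    intro ρ h1 h2
    have hv : (0:ℝ) < 1 - ρ ^ 2 := by nlinarith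
    have hne : (1 - ρ ^ 2) ≠ 0 := ne_of_gt hv
    have hsval : ∀ x : ℝ × ℝ, s x ρ =
        (x.1 * (x.2 - ρ * x.1) * (1 - ρ ^ 2) - ρ * (x.2 - ρ * x.1) ^ 2 + ρ * (1 - ρ ^ 2))
          / (1 - ρ ^ 2) ^ 2 := fun x => (hs x ρ).trans (score_formula hf x h1 h2)
    have hfsplit : ∀ x : ℝ × ℝ, f x ρ = (2 * π * Real.sqrt (1 - ρ ^ 2))⁻¹ *
        (Real.exp (-(2:ℝ)⁻¹ * x.1 ^ 2) *
          Real.exp (-(2 * (1 - ρ ^ 2))⁻¹ * (x.2 - ρ * x.1) ^ 2)) := by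
      intro x
      rw [hf, ← Real.exp_add]
      congr 1
      field_simp
      ring
    have hcont : ∀ (c : ℝ) (a : ℕ), Continuous fun t : ℝ => t ^ a * Real.exp (-c * t ^ 2) := by
      intro c a
      fun_prop
    have hint : ∀ a b : ℕ, Integrable (fun x : ℝ × ℝ =>
        x.1 ^ a * Real.exp (-(2:ℝ)⁻¹ * x.1 ^ 2) *
          ((x.2 - ρ * x.1) ^ b * Real.exp (-(2 * (1 - ρ ^ 2))⁻¹ * (x.2 - ρ * x.1) ^ 2))) :=
      fun a b => shear_integrable (hcont _ a) (hcont _ b)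
        (integrable_pow_gauss (by norm_num) a)
        (integrable_pow_gauss (inv_pos.mpr (by linarith)) b)
    have hT : ∀ a b : ℕ, (∫ x : ℝ × ℝ,
        x.1 ^ a * Real.exp (-(2:ℝ)⁻¹ * x.1 ^ 2) *
          ((x.2 - ρ * x.1) ^ b * Real.exp (-(2 * (1 - ρ ^ 2))⁻¹ * (x.2 - ρ * x.1) ^ 2))) =
        (∫ t : ℝ, t ^ a * Real.exp (-(2:ℝ)⁻¹ * t ^ 2)) *
          ∫ t : ℝ, t ^ b * Real.exp (-(2 * (1 - ρ ^ 2))⁻¹ * t ^ 2) :=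
      fun a b => shear_integral (hcont _ a) (hcont _ b)
        (integrable_pow_gauss (by norm_num) a)
        (integrable_pow_gauss (inv_pos.mpr (by linarith)) b)
    have hEq : (fun x : ℝ × ℝ => s x ρ ^ 3 * f x ρ) =
        (fun x : ℝ × ℝ => ((1-ρ^2)^3/(1-ρ^2)^6) * ((2 * π * Real.sqrt (1 - ρ ^ 2))⁻¹ * (x.1 ^ 3 * Real.exp (-(2:ℝ)⁻¹ * x.1 ^ 2) * ((x.2 - ρ * x.1) ^ 3 * Real.exp (-(2 * (1 - ρ ^ 2))⁻¹ * (x.2 - ρ * x.1) ^ 2)))))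
        + (fun x : ℝ × ℝ => (-3*ρ*(1-ρ^2)^2/(1-ρ^2)^6) * ((2 * π * Real.sqrt (1 - ρ ^ 2))⁻¹ * (x.1 ^ 2 * Real.exp (-(2:ℝ)⁻¹ * x.1 ^ 2) * ((x.2 - ρ * x.1) ^ 4 * Real.exp (-(2 * (1 - ρ ^ 2))⁻¹ * (x.2 - ρ * x.1) ^ 2)))))
        + (fun x : ℝ × ℝ => (3*ρ*(1-ρ^2)^3/(1-ρ^2)^6) * ((2 * π * Real.sqrt (1 - ρ ^ 2))⁻¹ * (x.1 ^ 2 * Real.exp (-(2:ℝ)⁻¹ * x.1 ^ 2) * ((x.2 - ρ * x.1) ^ 2 * Real.exp (-(2 * (1 - ρ ^ 2))⁻¹ * (x.2 - ρ * x.1) ^ 2)))))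
        + (fun x : ℝ × ℝ => (3*ρ^2*(1-ρ^2)/(1-ρ^2)^6) * ((2 * π * Real.sqrt (1 - ρ ^ 2))⁻¹ * (x.1 ^ 1 * Real.exp (-(2:ℝ)⁻¹ * x.1 ^ 2) * ((x.2 - ρ * x.1) ^ 5 * Real.exp (-(2 * (1 - ρ ^ 2))⁻¹ * (x.2 - ρ * x.1) ^ 2)))))
        + (fun x : ℝ × ℝ => (-6*ρ^2*(1-ρ^2)^2/(1-ρ^2)^6) * ((2 * π * Real.sqrt (1 - ρ ^ 2))⁻¹ * (x.1 ^ 1 * Real.exp (-(2:ℝ)⁻¹ * x.1 ^ 2) * ((x.2 - ρ * x.1) ^ 3 * Real.exp (-(2 * (1 - ρ ^ 2))⁻¹ * (x.2 - ρ * x.1) ^ 2)))))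
        + (fun x : ℝ × ℝ => (3*ρ^2*(1-ρ^2)^3/(1-ρ^2)^6) * ((2 * π * Real.sqrt (1 - ρ ^ 2))⁻¹ * (x.1 ^ 1 * Real.exp (-(2:ℝ)⁻¹ * x.1 ^ 2) * ((x.2 - ρ * x.1) ^ 1 * Real.exp (-(2 * (1 - ρ ^ 2))⁻¹ * (x.2 - ρ * x.1) ^ 2)))))
        + (fun x : ℝ × ℝ => (-ρ^3/(1-ρ^2)^6) * ((2 * π * Real.sqrt (1 - ρ ^ 2))⁻¹ * (x.1 ^ 0 * Real.exp (-(2:ℝ)⁻¹ * x.1 ^ 2) * ((x.2 - ρ * x.1) ^ 6 * Real.exp (-(2 * (1 - ρ ^ 2))⁻¹ * (x.2 - ρ * x.1) ^ 2)))))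
        + (fun x : ℝ × ℝ => (3*ρ^3*(1-ρ^2)/(1-ρ^2)^6) * ((2 * π * Real.sqrt (1 - ρ ^ 2))⁻¹ * (x.1 ^ 0 * Real.exp (-(2:ℝ)⁻¹ * x.1 ^ 2) * ((x.2 - ρ * x.1) ^ 4 * Real.exp (-(2 * (1 - ρ ^ 2))⁻¹ * (x.2 - ρ * x.1) ^ 2)))))
        + (fun x : ℝ × ℝ => (-3*ρ^3*(1-ρ^2)^2/(1-ρ^2)^6) * ((2 * π * Real.sqrt (1 - ρ ^ 2))⁻¹ * (x.1 ^ 0 * Real.exp (-(2:ℝ)⁻¹ * x.1 ^ 2) * ((x.2 - ρ * x.1) ^ 2 * Real.exp (-(2 * (1 - ρ ^ 2))⁻¹ * (x.2 - ρ * x.1) ^ 2)))))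
        + (fun x : ℝ × ℝ => (ρ^3*(1-ρ^2)^3/(1-ρ^2)^6) * ((2 * π * Real.sqrt (1 - ρ ^ 2))⁻¹ * (x.1 ^ 0 * Real.exp (-(2:ℝ)⁻¹ * x.1 ^ 2) * ((x.2 - ρ * x.1) ^ 0 * Real.exp (-(2 * (1 - ρ ^ 2))⁻¹ * (x.2 - ρ * x.1) ^ 2))))) := by
      funext x
      simp only [Pi.add_apply]
      rw [hsval x, hfsplit x]
      field_simp
      ring
    have i0 := ((hint 3 3).const_mul ((2 * π * Real.sqrt (1 - ρ ^ 2))⁻¹)).const_mul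
      (((1-ρ^2)^3/(1-ρ^2)^6) : ℝ)
    have i1 := ((hint 2 4).const_mul ((2 * π * Real.sqrt (1 - ρ ^ 2))⁻¹)).const_mul
      ((-3*ρ*(1-ρ^2)^2/(1-ρ^2)^6) : ℝ)
    have i2 := ((hint 2 2).const_mul ((2 * π * Real.sqrt (1 - ρ ^ 2))⁻¹)).const_mul
      ((3*ρ*(1-ρ^2)^3/(1-ρ^2)^6) : ℝ)
    have i3 := ((hint 1 5).const_mul ((2 * π * Real.sqrt (1 - ρ ^ 2))⁻¹)).const_mul
      ((3*ρ^2*(1-ρ^2)/(1-ρ^2)^6) : ℝ)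
    have i4 := ((hint 1 3).const_mul ((2 * π * Real.sqrt (1 - ρ ^ 2))⁻¹)).const_mul
      ((-6*ρ^2*(1-ρ^2)^2/(1-ρ^2)^6) : ℝ)
    have i5 := ((hint 1 1).const_mul ((2 * π * Real.sqrt (1 - ρ ^ 2))⁻¹)).const_mul
      ((3*ρ^2*(1-ρ^2)^3/(1-ρ^2)^6) : ℝ)
    have i6 := ((hint 0 6).const_mul ((2 * π * Real.sqrt (1 - ρ ^ 2))⁻¹)).const_mul
      ((-ρ^3/(1-ρ^2)^6) : ℝ)
    have i7 := ((hint 0 4).const_mul ((2 * π * Real.sqrt (1 - ρ ^ 2))⁻¹)).const_mul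
      ((3*ρ^3*(1-ρ^2)/(1-ρ^2)^6) : ℝ)
    have i8 := ((hint 0 2).const_mul ((2 * π * Real.sqrt (1 - ρ ^ 2))⁻¹)).const_mul
      ((-3*ρ^3*(1-ρ^2)^2/(1-ρ^2)^6) : ℝ)
    have i9 := ((hint 0 0).const_mul ((2 * π * Real.sqrt (1 - ρ ^ 2))⁻¹)).const_mul
      ((ρ^3*(1-ρ^2)^3/(1-ρ^2)^6) : ℝ)
    rw [hL ρ, hEq]
    rw [MeasureTheory.integral_add' ((((((((i0.add i1).add i2).add i3).add i4).add i5).add i6).add i7).add i8) i9]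
    rw [MeasureTheory.integral_add' (((((((i0.add i1).add i2).add i3).add i4).add i5).add i6).add i7) i8]
    rw [MeasureTheory.integral_add' ((((((i0.add i1).add i2).add i3).add i4).add i5).add i6) i7]
    rw [MeasureTheory.integral_add' (((((i0.add i1).add i2).add i3).add i4).add i5) i6]
    rw [MeasureTheory.integral_add' ((((i0.add i1).add i2).add i3).add i4) i5]
    rw [MeasureTheory.integral_add' (((i0.add i1).add i2).add i3) i4]
    rw [MeasureTheory.integral_add' ((i0.add i1).add i2) i3]
    rw [MeasureTheory.integral_add' (i0.add i1) i2]
    rw [MeasureTheory.integral_add' i0 i1]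
    simp only [MeasureTheory.integral_const_mul]
    rw [hT 3 3, hT 2 4, hT 2 2, hT 1 5, hT 1 3, hT 1 1, hT 0 6, hT 0 4, hT 0 2, hT 0 0]
    rw [A0val, A1val, A2val, A3val, B0val hv, B1val, B2val hv, B3val, B4val hv, B5val, B6val hv]
    rw [M0 hv, M2 hv, M4 hv, M6 hv]
    field_simp
    ring
  have hratio : ∀ ρ : ℝ, -1 < ρ → ρ < 1 →
      L ρ / (I ρ) ^ ((3 : ℝ) / 2) = -2 * ρ * (3 + ρ ^ 2) / (1 + ρ ^ 2) ^ ((3 : ℝ) / 2) := by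
    intro ρ h1 h2
    have hv : (0:ℝ) < 1 - ρ ^ 2 := by nlinarith
    rw [hIval ρ h1 h2, hLval ρ h1 h2,
      Real.div_rpow (by positivity) (by positivity)]
    have h3 : (((1 - ρ ^ 2) ^ 2 : ℝ)) ^ ((3:ℝ)/2) = (1 - ρ ^ 2) ^ 3 := by
      rw [← Real.rpow_natCast (1 - ρ ^ 2) 2, ← Real.rpow_mul hv.le,
        ← Real.rpow_natCast (1 - ρ ^ 2) 3]
      norm_num
    rw [h3]
    have hp : (0:ℝ) < (1 + ρ ^ 2) ^ ((3:ℝ)/2) := Real.rpow_pos_of_pos (by positivity) _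
    have h6 : ((1 - ρ ^ 2) ^ 3 : ℝ) ≠ 0 := by positivity
    field_simp
  refine ⟨hIval, hLval, hratio, ?_⟩
  rintro ⟨c, hc⟩
  have h0 : (0:ℝ) = c := by
    have := (hc 0 (by norm_num) (by norm_num)).symm.trans (hratio 0 (by norm_num) (by norm_num))
    simp at this
    linarith [this]
  have hhalf := (hc (1/2) (by norm_num) (by norm_num)).symm.trans
    (hratio (1/2) (by norm_num) (by norm_num))
  rw [← h0] at hhalf
  have hneg : -2 * (1/2 : ℝ) * (3 + (1/2:ℝ) ^ 2) / (1 + (1/2:ℝ) ^ 2) ^ ((3:ℝ)/2) < 0 :=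
    div_neg_of_neg_of_pos (by norm_num) (Real.rpow_pos_of_pos (by norm_num) _)
  rw [← hhalf] at hneg
  exact lt_irrefl 0 hneg
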